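/- arXiv:2511.02076 — 3 statements merged into one kernel-verified Lean document; each statement's English description precedes it below -/
import Mathlib

section
/- Two polynomials p₁, p₂ in M complex variables are mutually disjoint (there exists a unitary change of variables U such that p₁∘U depends only on the first M−n variables and p₂∘U depends only on the last n variables, for some n) if and only if their essential variables spaces are orthogonal: E(p₁) ⊥ E(p₂). -/
open MvPolynomial

/-- Gradient of a multivariate polynomial: vector of formal partial derivatives evaluated at `z`. -/
noncomputable def grad {M : ℕ} (p : MvPolynomial (Fin M) ℂ) (z : Fin M → ℂ) : Fin M → ℂ :=
  fun j => eval z (pderiv j p)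

/-- Space of essential variables: span of all pointwise evaluations of the gradient. -/
noncomputable def essSpace {M : ℕ} (p : MvPolynomial (Fin M) ℂ) : Submodule ℂ (Fin M → ℂ) :=
  Submodule.span ℂ (Set.range (grad p))

/-- Composition of a polynomial with a linear change of variables: `(compLin U p)(z) = p (U z)`. -/
noncomputable def compLin {M : ℕ} (U : Matrix (Fin M) (Fin M) ℂ) (p : MvPolynomial (Fin M) ℂ) :
    MvPolynomial (Fin M) ℂ :=
  aeval (fun i => ∑ j, C (U i j) * X j) p

/-- Standard Hermitian inner product on `ℂ^M`. -/
noncomputable def herm {M : ℕ} (v w : Fin M → ℂ) : ℂ := ∑ j, (starRingEnd ℂ) (v j) * w j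

lemma pderiv_compLin {M : ℕ} (U : Matrix (Fin M) (Fin M) ℂ) (p : MvPolynomial (Fin M) ℂ)
    (j : Fin M) :
    pderiv j (compLin U p) = ∑ i, C (U i j) * compLin U (pderiv i p) := by
  unfold compLin
  set f : Fin M → MvPolynomial (Fin M) ℂ := fun i => ∑ j, C (U i j) * X j with hf
  have hfd : ∀ k, pderiv j (f k) = C (U k j) := by
    intro k
    rw [hf]
    simp only [map_sum, pderiv_mul, pderiv_C, zero_mul, zero_add]
    rw [Finset.sum_eq_single j]
    · simp
    · intro b _ hb; simp [pderiv_X_of_ne hb]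
    · simp
  induction p using MvPolynomial.induction_on with
  | C a => simp
  | add p q hp hq => simp only [map_add, hp, hq, mul_add, Finset.sum_add_distrib]
  | mul_X p k hp =>
      simp only [map_mul, aeval_X, pderiv_mul, hp, hfd, map_add]
      simp only [mul_add, Finset.sum_add_distrib]
      congr 1
      · rw [Finset.sum_mul]
        exact Finset.sum_congr rfl fun i _ => by ring
      · rw [Finset.sum_eq_single k]
        · simp [pderiv_X_self, mul_comm]
        · intro b _ hb
          simp [Pi.single_eq_of_ne (Ne.symm hb)]
        · simp

lemma eval_compLin {M : ℕ} (U : Matrix (Fin M) (Fin M) ℂ) (p : MvPolynomial (Fin M) ℂ)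
    (z : Fin M → ℂ) : eval z (compLin U p) = eval (U.mulVec z) p := by
  unfold compLin
  induction p using MvPolynomial.induction_on with
  | C a => simp
  | add p q hp hq => simp only [map_add, hp, hq]
  | mul_X p k hp =>
      simp only [map_mul, aeval_X, hp, map_sum, eval_mul, eval_C, eval_X]
      congr 1

lemma eval_grad_compLin {M : ℕ} (U : Matrix (Fin M) (Fin M) ℂ) (p : MvPolynomial (Fin M) ℂ)
    (j : Fin M) (z : Fin M → ℂ) :
    eval z (pderiv j (compLin U p)) = ∑ i, U i j * grad p (U.mulVec z) i := by
  rw [pderiv_compLin]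
  simp only [map_sum, eval_mul, eval_C, eval_compLin]
  simp [grad]

lemma herm_conj {M : ℕ} (v w : Fin M → ℂ) : herm v w = (starRingEnd ℂ) (herm w v) := by
  simp only [herm, map_sum, map_mul, RingHomCompTriple.comp_apply, RingHom.id_apply]
  exact Finset.sum_congr rfl fun i _ => by ring

lemma pderiv_compLin_eq_zero_iff {M : ℕ} {U : Matrix (Fin M) (Fin M) ℂ}
    (hU : U ∈ Matrix.unitaryGroup (Fin M) ℂ) (p : MvPolynomial (Fin M) ℂ) (j : Fin M) :
    pderiv j (compLin U p) = 0 ↔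
      ∀ v ∈ essSpace p, herm (fun i => (starRingEnd ℂ) (U i j)) v = 0 := by
  have hsurj : Function.Surjective (U.mulVec) := by
    intro w
    refine ⟨(star U).mulVec w, ?_⟩
    rw [Matrix.mulVec_mulVec, Matrix.mem_unitaryGroup_iff.mp hU, Matrix.one_mulVec]
  constructor
  · intro h v hv
    induction hv using Submodule.span_induction with
    | mem x hx =>
        obtain ⟨w, rfl⟩ := hx
        obtain ⟨z, rfl⟩ := hsurj w
        have h2 := eval_grad_compLin U p j z
        rw [h] at h2
        simp only [map_zero] at h2
        simp only [herm, RingHomCompTriple.comp_apply, RingHom.id_apply]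
        rw [← h2]
    | zero =>
        simp only [herm]
        exact Finset.sum_eq_zero fun i _ => by simp
    | add x y _ _ hx hy =>
        have : herm (fun i => (starRingEnd ℂ) (U i j)) (x + y)
            = herm (fun i => (starRingEnd ℂ) (U i j)) x
              + herm (fun i => (starRingEnd ℂ) (U i j)) y := by
          simp only [herm, ← Finset.sum_add_distrib]
          exact Finset.sum_congr rfl fun i _ => by simp [mul_add]
        rw [this, hx, hy, add_zero]
    | smul a x _ hx =>
        have : herm (fun i => (starRingEnd ℂ) (U i j)) (a • x)
            = a * herm (fun i => (starRingEnd ℂ) (U i j)) x := by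
          simp only [herm, Finset.mul_sum, Pi.smul_apply, smul_eq_mul]
          exact Finset.sum_congr rfl fun i _ => by ring
        rw [this, hx, mul_zero]
  · intro h
    have hz : ∀ z, eval z (pderiv j (compLin U p)) = eval z (0 : MvPolynomial (Fin M) ℂ) := by
      intro z
      rw [eval_grad_compLin U p j z, map_zero]
      have hv : grad p (U.mulVec z) ∈ essSpace p :=
        Submodule.subset_span ⟨U.mulVec z, rfl⟩
      have h2 := h _ hv
      simp only [herm, RingHomCompTriple.comp_apply, RingHom.id_apply] at h2
      rw [← h2]
    exact MvPolynomial.funext hz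

lemma herm_parseval {M : ℕ} {U : Matrix (Fin M) (Fin M) ℂ}
    (hU : U ∈ Matrix.unitaryGroup (Fin M) ℂ) (v w : Fin M → ℂ) :
    herm v w = ∑ j, herm v (fun i => (starRingEnd ℂ) (U i j))
      * herm (fun i => (starRingEnd ℂ) (U i j)) w := by
  have key : ∀ i k : Fin M, (∑ j, (starRingEnd ℂ) (U i j) * U k j)
      = if k = i then 1 else 0 := by
    intro i k
    have h2 := congrArg (fun m => m k i) (Matrix.mem_unitaryGroup_iff.mp hU)
    simp only [Matrix.mul_apply, Matrix.star_apply, Matrix.one_apply] at h2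
    rw [← h2]
    exact Finset.sum_congr rfl fun j _ => by rw [mul_comm]; rfl
  calc herm v w
      = ∑ i, ∑ k, ((starRingEnd ℂ) (v i) * w k) * ∑ j, (starRingEnd ℂ) (U i j) * U k j := by
        simp only [key, mul_ite, mul_one, mul_zero]
        simp [herm, Finset.sum_ite_eq']
    _ = ∑ i, ∑ k, ∑ j, ((starRingEnd ℂ) (v i) * w k) * ((starRingEnd ℂ) (U i j) * U k j) := by
        simp only [Finset.mul_sum]
    _ = ∑ i, ∑ j, ∑ k, ((starRingEnd ℂ) (v i) * w k) * ((starRingEnd ℂ) (U i j) * U k j) :=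
        Finset.sum_congr rfl fun i _ => Finset.sum_comm
    _ = ∑ j, ∑ i, ∑ k, ((starRingEnd ℂ) (v i) * w k) * ((starRingEnd ℂ) (U i j) * U k j) :=
        Finset.sum_comm
    _ = ∑ j, herm v (fun i => (starRingEnd ℂ) (U i j))
        * herm (fun i => (starRingEnd ℂ) (U i j)) w := by
        refine Finset.sum_congr rfl fun j _ => ?_
        rw [herm, herm, Finset.sum_mul_sum]
        refine Finset.sum_congr rfl fun i _ => Finset.sum_congr rfl fun k _ => ?_
        simp only [RingHomCompTriple.comp_apply, RingHom.id_apply, Complex.conj_conj]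
        ring

lemma herm_eq_inner {M : ℕ} (v w : EuclideanSpace ℂ (Fin M)) :
    herm v w = inner ℂ v w := by
  rw [PiLp.inner_apply]
  simp only [RCLike.inner_apply]
  rw [herm]; exact Finset.sum_congr rfl fun i _ => mul_comm _ _

/-- Two polynomials are mutually disjoint (some unitary change of variables makes them
depend on complementary sets of coordinates) iff their essential spaces are orthogonal. -/
theorem disjoint_iff_essSpace_orthogonal {M : ℕ} (p₁ p₂ : MvPolynomial (Fin M) ℂ) :
    (∃ n : ℕ, ∃ U ∈ Matrix.unitaryGroup (Fin M) ℂ,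
      (∀ j : Fin M, M - n ≤ (j : ℕ) → pderiv j (compLin U p₁) = 0) ∧
      (∀ j : Fin M, (j : ℕ) < M - n → pderiv j (compLin U p₂) = 0)) ↔
    (∀ v ∈ essSpace p₁, ∀ w ∈ essSpace p₂, herm v w = 0) := by
  constructor
  · rintro ⟨n, U, hU, h1, h2⟩ v hv w hw
    rw [herm_parseval hU v w]
    refine Finset.sum_eq_zero fun j _ => ?_
    by_cases hj : M - n ≤ (j : ℕ)
    · have hz := (pderiv_compLin_eq_zero_iff hU p₁ j).mp (h1 j hj) v hv
      rw [herm_conj, hz]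
      simp
    · have hz := (pderiv_compLin_eq_zero_iff hU p₂ j).mp (h2 j (lt_of_not_ge hj)) w hw
      rw [hz, mul_zero]
  · intro horth
    set F : Submodule ℂ (EuclideanSpace ℂ (Fin M)) :=
      (essSpace p₂).comap (WithLp.linearEquiv 2 ℂ (Fin M → ℂ)).toLinearMap with hF
    set n : ℕ := Module.finrank ℂ F with hn
    set k : ℕ := Module.finrank ℂ Fᗮ with hk
    have hnk : n + k = M := by
      have h := F.finrank_add_finrank_orthogonal
      rw [finrank_euclideanSpace_fin] at h
      rw [hn, hk]
      exact h
    let c : Fin M → EuclideanSpace ℂ (Fin M) := fun j =>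
      if h : (j : ℕ) < k then (stdOrthonormalBasis ℂ Fᗮ ⟨j, h⟩ : EuclideanSpace ℂ (Fin M))
      else (stdOrthonormalBasis ℂ F ⟨(j : ℕ) - k, by omega⟩ : EuclideanSpace ℂ (Fin M))
    have hmem1 : ∀ j : Fin M, (j : ℕ) < k → c j ∈ Fᗮ := by
      intro j h
      simp only [c, dif_pos h]
      exact SetLike.coe_mem _
    have hmem2 : ∀ j : Fin M, ¬ (j : ℕ) < k → c j ∈ F := by
      intro j h
      simp only [c, dif_neg h]
      exact SetLike.coe_mem _
    have horthn : Orthonormal ℂ c := by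
      rw [orthonormal_iff_ite]
      intro i j
      by_cases hi : (i : ℕ) < k <;> by_cases hj : (j : ℕ) < k
      · simp only [c, dif_pos hi, dif_pos hj, ← Submodule.coe_inner]
        rw [orthonormal_iff_ite.mp (stdOrthonormalBasis ℂ Fᗮ).orthonormal]
        congr 1
        simp only [Fin.mk.injEq, eq_iff_iff, Fin.ext_iff]
      · rw [inner_eq_zero_symm.mpr
          (Submodule.inner_right_of_mem_orthogonal (hmem2 j hj) (hmem1 i hi))]
        rw [if_neg (by rintro rfl; exact hj hi)]
      · rw [Submodule.inner_right_of_mem_orthogonal (hmem2 i hi) (hmem1 j hj)]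
        rw [if_neg (by rintro rfl; exact hi hj)]
      · simp only [c, dif_neg hi, dif_neg hj, ← Submodule.coe_inner]
        rw [orthonormal_iff_ite.mp (stdOrthonormalBasis ℂ F).orthonormal]
        congr 1
        simp only [Fin.mk.injEq, eq_iff_iff, Fin.ext_iff]
        omega
    set Umat : Matrix (Fin M) (Fin M) ℂ := fun i j => (starRingEnd ℂ) (c j i) with hUmat
    have hUmem : Umat ∈ Matrix.unitaryGroup (Fin M) ℂ := by
      rw [Matrix.mem_unitaryGroup_iff']
      ext j l
      have hp := orthonormal_iff_ite.mp horthn l j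
      rw [PiLp.inner_apply] at hp
      simp only [RCLike.inner_apply] at hp
      simp only [Matrix.mul_apply, Matrix.star_apply, Matrix.one_apply, hUmat]
      calc (∑ i, star ((starRingEnd ℂ) (c j i)) * (starRingEnd ℂ) (c l i))
          = ∑ i, (starRingEnd ℂ) (c l i) * c j i := by
            refine Finset.sum_congr rfl fun i _ => ?_
            simp only [RCLike.star_def, Complex.conj_conj]
            ring
        _ = if l = j then 1 else 0 := by
          rw [← hp]; exact Finset.sum_congr rfl fun i _ => mul_comm _ _
        _ = if j = l then 1 else 0 := by simp [eq_comm]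
    refine ⟨n, Umat, hUmem, ?_, ?_⟩
    · intro j hj
      rw [pderiv_compLin_eq_zero_iff hUmem p₁ j]
      intro v hv
      have hceq : (fun i => (starRingEnd ℂ) ((starRingEnd ℂ) (c j i))) = c j := by
        funext i; simp
      rw [hceq]
      have hcj : WithLp.ofLp (c j) ∈ essSpace p₂ := hmem2 j (by omega)
      rw [herm_conj, horth v hv (WithLp.ofLp (c j)) hcj]
      simp
    · intro j hj
      rw [pderiv_compLin_eq_zero_iff hUmem p₂ j]
      intro w hw
      have hceq : (fun i => (starRingEnd ℂ) ((starRingEnd ℂ) (c j i))) = c j := by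
        funext i; simp
      rw [hceq]
      have hcj : c j ∈ Fᗮ := hmem1 j (by omega)
      have : herm (WithLp.ofLp (c j)) w = inner ℂ (c j) (WithLp.toLp 2 w) := herm_eq_inner _ _
      rw [this]
      exact Submodule.inner_left_of_mem_orthogonal (show WithLp.toLp 2 w ∈ F from hw) hcj
end

section
/- Let p = p₁ · p₂ be a product of two nonzero polynomials in M complex variables such that E(p₁) ⊥ E(p₂). Then E(p) = E(p₁) ⊕ E(p₂) (orthogonal direct sum), provided both p₁ and p₂ are nonconstant. -/
open MvPolynomial

/-! ### Auxiliary machinery -/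

/-- Directional (formal) derivative of a multivariate polynomial. -/
noncomputable def Pd {M : ℕ} (v : Fin M → ℂ) (p : MvPolynomial (Fin M) ℂ) :
    MvPolynomial (Fin M) ℂ := ∑ j, v j • pderiv j p

lemma eval_Pd {M : ℕ} (v z : Fin M → ℂ) (p : MvPolynomial (Fin M) ℂ) :
    eval z (Pd v p) = ∑ j, v j * eval z (pderiv j p) := by
  simp [Pd, smul_eq_C_mul]

lemma Pd_eq_zero_of_eval {M : ℕ} {v : Fin M → ℂ} {p : MvPolynomial (Fin M) ℂ}
    (h : ∀ z, eval z (Pd v p) = 0) : Pd v p = 0 :=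
  MvPolynomial.funext (fun x => by rw [h x]; simp)

lemma eval_eq_zero_imp_zero {M : ℕ} {p : MvPolynomial (Fin M) ℂ}
    (h : ∀ z, eval z p = 0) : p = 0 :=
  MvPolynomial.funext (fun x => by rw [h x]; simp)

lemma my_pderiv_comm {M : ℕ} (i j : Fin M) (p : MvPolynomial (Fin M) ℂ) :
    pderiv i (pderiv j p) = pderiv j (pderiv i p) := by
  induction p using MvPolynomial.induction_on' with
  | monomial s a =>
      simp only [pderiv_monomial]
      rcases eq_or_ne i j with rfl | hij
      · rfl
      · have h1 : ((s - Finsupp.single j 1 : Fin M →₀ ℕ)) i = s i := by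
          simp [Finsupp.tsub_apply, Finsupp.single_apply, hij.symm]
        have h2 : ((s - Finsupp.single i 1 : Fin M →₀ ℕ)) j = s j := by
          simp [Finsupp.tsub_apply, Finsupp.single_apply, hij]
        rw [h1, h2, tsub_right_comm]
        ring_nf
  | add p q hp hq => simp [hp, hq]

lemma Pd_comm {M : ℕ} (u v : Fin M → ℂ) (p : MvPolynomial (Fin M) ℂ) :
    Pd u (Pd v p) = Pd v (Pd u p) := by
  have key : ∀ (a b : Fin M → ℂ) (q : MvPolynomial (Fin M) ℂ),
      Pd a (Pd b q) = ∑ i, ∑ j, (a i * b j) • pderiv i (pderiv j q) := by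
    intro a b q
    simp [Pd, Finset.smul_sum, smul_smul]
  rw [key, key, Finset.sum_comm]
  refine Finset.sum_congr rfl fun j _ => Finset.sum_congr rfl fun i _ => ?_
  rw [my_pderiv_comm, mul_comm]

lemma Pd_zero_right {M : ℕ} (v : Fin M → ℂ) : Pd v (0 : MvPolynomial (Fin M) ℂ) = 0 := by
  simp [Pd]

lemma Pd_add_left {M : ℕ} (u u' : Fin M → ℂ) (p : MvPolynomial (Fin M) ℂ) :
    Pd (u + u') p = Pd u p + Pd u' p := by
  simp [Pd, add_smul, Finset.sum_add_distrib]

lemma Pd_smul_left {M : ℕ} (c : ℂ) (u : Fin M → ℂ) (p : MvPolynomial (Fin M) ℂ) :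
    Pd (c • u) p = c • Pd u p := by
  simp [Pd, Finset.smul_sum, smul_smul]

lemma Pd_zero_left {M : ℕ} (p : MvPolynomial (Fin M) ℂ) : Pd (0 : Fin M → ℂ) p = 0 := by
  simp [Pd]

lemma Pd_span_zero {M : ℕ} {p : MvPolynomial (Fin M) ℂ} {s : Set (Fin M → ℂ)}
    (h : ∀ u ∈ s, Pd u p = 0) : ∀ u ∈ Submodule.span ℂ s, Pd u p = 0 := by
  intro u hu
  induction hu using Submodule.span_induction with
  | mem x hx => exact h x hx
  | zero => exact Pd_zero_left p
  | add x y _ _ hx hy => rw [Pd_add_left, hx, hy, add_zero]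
  | smul c x _ hx => rw [Pd_smul_left, hx, smul_zero]

lemma Pd_mul {M : ℕ} (v : Fin M → ℂ) (p q : MvPolynomial (Fin M) ℂ) :
    Pd v (p * q) = Pd v p * q + p * Pd v q := by
  simp only [Pd, pderiv_mul, smul_add, Finset.sum_add_distrib, Finset.sum_mul, Finset.mul_sum,
    smul_mul_assoc, mul_smul_comm]

lemma Pd_mul_X {M : ℕ} (v : Fin M → ℂ) (p : MvPolynomial (Fin M) ℂ) (i : Fin M) :
    Pd v (p * X i) = Pd v p * X i + v i • p := by
  classical
  simp only [Pd, pderiv_mul, smul_add, Finset.sum_add_distrib, Finset.sum_mul, smul_mul_assoc]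
  congr 1
  rw [Finset.sum_eq_single i]
  · simp
  · intro j _ hj; simp [pderiv_X_of_ne (Ne.symm hj)]
  · simp

/-- Restriction of a multivariate polynomial to the affine line `t ↦ z + t v`. -/
noncomputable def polyLine {M : ℕ} (z v : Fin M → ℂ) :
    MvPolynomial (Fin M) ℂ →ₐ[ℂ] Polynomial ℂ :=
  aeval (fun i => Polynomial.C (z i) + Polynomial.C (v i) * Polynomial.X)

lemma derivative_polyLine {M : ℕ} (z v : Fin M → ℂ) (p : MvPolynomial (Fin M) ℂ) :
    Polynomial.derivative (polyLine z v p) = polyLine z v (Pd v p) := by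
  induction p using MvPolynomial.induction_on with
  | C a => simp [polyLine, Pd]
  | add p q hp hq => simp [map_add, hp, hq, Pd_add_left]
                     simp [Pd, smul_add, Finset.sum_add_distrib]
  | mul_X p i h =>
      rw [Pd_mul_X]
      simp only [polyLine] at h ⊢
      simp only [map_add, map_mul, map_smul, aeval_X, Polynomial.derivative_mul, h]
      simp only [Polynomial.derivative_C, Polynomial.derivative_X, Polynomial.smul_eq_C_mul]
      ring

lemma eval_polyLine {M : ℕ} (z v : Fin M → ℂ) (t : ℂ) (p : MvPolynomial (Fin M) ℂ) :
    (polyLine z v p).eval t = eval (fun i => z i + v i * t) p := by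
  induction p using MvPolynomial.induction_on with
  | C a => simp [polyLine]
  | add p q hp hq => simp only [polyLine, map_add, Polynomial.eval_add] at *; rw [hp, hq]
  | mul_X p i h => simp only [polyLine, map_mul, aeval_X, Polynomial.eval_mul, eval_mul] at *
                   simp [h]

lemma eval_add_of_Pd_eq_zero {M : ℕ} {v : Fin M → ℂ} {p : MvPolynomial (Fin M) ℂ}
    (hv : Pd v p = 0) (z : Fin M → ℂ) : eval (z + v) p = eval z p := by
  have hf := derivative_polyLine z v p
  rw [hv, map_zero] at hf
  have hC : polyLine z v p = Polynomial.C ((polyLine z v p).coeff 0) :=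
    Polynomial.eq_C_of_derivative_eq_zero hf
  have h1 := eval_polyLine z v 1 p
  have h0 := eval_polyLine z v 0 p
  rw [hC] at h1 h0
  simp only [Polynomial.eval_C] at h1 h0
  rw [show (fun i => z i + v i * 1) = z + v from by funext i; simp] at h1
  rw [show (fun i => z i + v i * 0) = z from by funext i; simp] at h0
  rw [← h1, ← h0]

lemma exists_eval_ne {M : ℕ} {p : MvPolynomial (Fin M) ℂ} (hp : p ≠ 0) :
    ∃ z, eval z p ≠ 0 := by
  by_contra h
  push_neg at h
  exact hp (eval_eq_zero_imp_zero h)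

lemma herm_grad {M : ℕ} (w z : Fin M → ℂ) (p : MvPolynomial (Fin M) ℂ) :
    herm w (grad p z) = eval z (Pd (star w) p) := by
  rw [eval_Pd]
  simp [herm, grad]

lemma mem_of_forall_herm {M : ℕ} (V : Submodule ℂ (Fin M → ℂ)) (x : Fin M → ℂ)
    (h : ∀ w, (∀ y ∈ V, herm w y = 0) → herm w x = 0) : x ∈ V := by
  by_contra hx
  have hx' : V.mkQ x ≠ 0 := by
    simpa [Submodule.Quotient.mk_eq_zero] using hx
  obtain ⟨g, hg⟩ : ∃ g : Module.Dual ℂ ((Fin M → ℂ) ⧸ V), g (V.mkQ x) ≠ 0 := by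
    by_contra hg
    push_neg at hg
    exact hx' ((Module.forall_dual_apply_eq_zero_iff ℂ _).mp hg)
  set f : (Fin M → ℂ) →ₗ[ℂ] ℂ := g.comp V.mkQ with hf
  have hfw : ∀ y, herm (fun j => (starRingEnd ℂ) (f (fun k => if j = k then 1 else 0))) y = f y := by
    intro y
    rw [LinearMap.pi_apply_eq_sum_univ f y]
    simp [herm, mul_comm]
  have h0 : ∀ y ∈ V, herm (fun j => (starRingEnd ℂ) (f (fun k => if j = k then 1 else 0))) y = 0 := by
    intro y hy
    rw [hfw]
    have : V.mkQ y = 0 := by simpa [Submodule.Quotient.mk_eq_zero] using hy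
    simp [hf, LinearMap.comp_apply, this]
  have := h _ h0
  rw [hfw] at this
  exact hg this

lemma exists_herm_decomp {M : ℕ} (S : Submodule ℂ (Fin M → ℂ)) (z : Fin M → ℂ) :
    ∃ u u', z = u + u' ∧ u ∈ S ∧ ∀ s ∈ S, herm s u' = 0 := by
  let e : EuclideanSpace ℂ (Fin M) ≃ₗ[ℂ] (Fin M → ℂ) := WithLp.linearEquiv 2 ℂ (Fin M → ℂ)
  let S' : Submodule ℂ (EuclideanSpace ℂ (Fin M)) := S.comap e.toLinearMap
  obtain ⟨y, hy, w, hw, hzw⟩ := S'.exists_add_mem_mem_orthogonal (e.symm z)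
  refine ⟨e y, e w, ?_, hy, ?_⟩
  · have := congrArg e hzw
    simpa using this
  · intro s hs
    have hs' : e.symm s ∈ S' := by
      simp only [S', Submodule.mem_comap]
      simpa using hs
    have horth := (Submodule.mem_orthogonal _ _).mp hw (e.symm s) hs'
    simpa [herm, PiLp.inner_apply, RCLike.inner_apply, e, mul_comm] using horth

/-- For a product of two nonzero, nonconstant polynomials with orthogonal essential
spaces, the essential space of the product is the orthogonal direct sum. -/
theorem essSpace_mul_of_orthogonal {M : ℕ} (p₁ p₂ : MvPolynomial (Fin M) ℂ)
    (hp₁ : p₁ ≠ 0) (hp₂ : p₂ ≠ 0)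
    (h₁ : p₁.totalDegree ≠ 0) (h₂ : p₂.totalDegree ≠ 0)
    (horth : ∀ v ∈ essSpace p₁, ∀ w ∈ essSpace p₂, herm v w = 0) :
    essSpace (p₁ * p₂) = essSpace p₁ ⊔ essSpace p₂ ∧
    essSpace p₁ ⊓ essSpace p₂ = ⊥ := by
  classical
  have hg1 : ∀ z, grad p₁ z ∈ essSpace p₁ := fun z => Submodule.subset_span ⟨z, rfl⟩
  have hg2 : ∀ z, grad p₂ z ∈ essSpace p₂ := fun z => Submodule.subset_span ⟨z, rfl⟩
  -- the intersection is trivial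
  have hinf : essSpace p₁ ⊓ essSpace p₂ = ⊥ := by
    rw [eq_bot_iff]
    rintro v hv
    rw [Submodule.mem_inf] at hv
    have h0 := horth v hv.1 v hv.2
    have h0' : ((∑ j, Complex.normSq (v j) : ℝ) : ℂ) = 0 := by
      rw [← h0]
      simp only [herm]
      push_cast
      exact Finset.sum_congr rfl fun j _ => by
        rw [Complex.normSq_eq_conj_mul_self]
    rw [Complex.ofReal_eq_zero] at h0'
    have hjz : ∀ j ∈ Finset.univ, Complex.normSq (v j) = 0 :=
      (Finset.sum_eq_zero_iff_of_nonneg (fun j _ => Complex.normSq_nonneg (v j))).mp h0'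
    have : v = 0 := by
      funext j
      exact Complex.normSq_eq_zero.mp (hjz j (Finset.mem_univ j))
    simp [this]
  -- product rule
  have hprod : ∀ z, grad (p₁ * p₂) z = eval z p₂ • grad p₁ z + eval z p₁ • grad p₂ z := by
    intro z; funext j
    simp only [grad, pderiv_mul, map_add, map_mul, Pi.add_apply, Pi.smul_apply, smul_eq_mul]
    ring
  have hle : essSpace (p₁ * p₂) ≤ essSpace p₁ ⊔ essSpace p₂ := by
    rw [essSpace, Submodule.span_le]
    rintro _ ⟨z, rfl⟩
    rw [SetLike.mem_coe, hprod z]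
    exact Submodule.add_mem _ (Submodule.mem_sup_left (Submodule.smul_mem _ _ (hg1 z)))
      (Submodule.mem_sup_right (Submodule.smul_mem _ _ (hg2 z)))
  -- the key step
  have key : ∀ w : Fin M → ℂ, (∀ y ∈ essSpace (p₁ * p₂), herm w y = 0) →
      (∀ z, herm w (grad p₁ z) = 0) ∧ (∀ z, herm w (grad p₂ z) = 0) := by
    intro w hw
    have hI : Pd (star w) p₁ * p₂ + p₁ * Pd (star w) p₂ = 0 := by
      rw [← Pd_mul]
      refine Pd_eq_zero_of_eval fun x => ?_
      rw [← herm_grad]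
      exact hw _ (Submodule.subset_span ⟨x, rfl⟩)
    set W : Submodule ℂ (Fin M → ℂ) :=
      Submodule.span ℂ (Set.range (fun ζ => star (grad p₁ ζ))) with hWdef
    have hWp₂ : ∀ u ∈ W, Pd u p₂ = 0 := by
      refine Pd_span_zero ?_
      rintro _ ⟨ζ, rfl⟩
      refine Pd_eq_zero_of_eval fun x => ?_
      rw [eval_Pd]
      have := horth _ (hg1 ζ) _ (hg2 x)
      simpa [herm, grad] using this
    have hWq₂ : ∀ u ∈ W, Pd u (Pd (star w) p₂) = 0 := by
      intro u hu
      rw [Pd_comm, hWp₂ u hu, Pd_zero_right]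
    obtain ⟨z₀, hz₀⟩ := exists_eval_ne hp₂
    set lam : ℂ := -(eval z₀ (Pd (star w) p₂)) / eval z₀ p₂ with hlamdef
    have hC1 : ∀ z, eval z (Pd (star w) p₁) = lam * eval z p₁ := by
      intro z
      obtain ⟨u, u', huu, hu, hu'⟩ := exists_herm_decomp W (z - z₀)
      have hz : z = (z₀ + u) + u' := by
        rw [add_assoc, ← huu]
        abel
      have hu'p₁ : Pd u' p₁ = 0 := by
        refine Pd_eq_zero_of_eval fun x => ?_
        rw [eval_Pd]
        have := hu' (star (grad p₁ x)) (Submodule.subset_span ⟨x, rfl⟩)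
        simp only [herm, Pi.star_apply, Complex.star_def, Complex.conj_conj] at this
        rw [← this]
        exact Finset.sum_congr rfl fun j _ => by rw [mul_comm]; rfl
      have hu'q₁ : Pd u' (Pd (star w) p₁) = 0 := by
        rw [Pd_comm, hu'p₁, Pd_zero_right]
      have e1 : eval z (Pd (star w) p₁) = eval (z₀ + u) (Pd (star w) p₁) := by
        rw [hz]; exact eval_add_of_Pd_eq_zero hu'q₁ _
      have e2 : eval z p₁ = eval (z₀ + u) p₁ := by
        rw [hz]; exact eval_add_of_Pd_eq_zero hu'p₁ _
      have e3 : eval (z₀ + u) p₂ = eval z₀ p₂ := eval_add_of_Pd_eq_zero (hWp₂ u hu) z₀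
      have e4 : eval (z₀ + u) (Pd (star w) p₂) = eval z₀ (Pd (star w) p₂) :=
        eval_add_of_Pd_eq_zero (hWq₂ u hu) z₀
      have e5 : eval (z₀ + u) (Pd (star w) p₁) * eval (z₀ + u) p₂
          + eval (z₀ + u) p₁ * eval (z₀ + u) (Pd (star w) p₂) = 0 := by
        have := congrArg (eval (z₀ + u)) hI
        simpa using this
      rw [e3, e4] at e5
      rw [e1, e2, hlamdef]
      field_simp
      linear_combination e5
    have hq₁p : Pd (star w) p₁ = C lam * p₁ :=
      MvPolynomial.funext fun x => by rw [map_mul, eval_C, hC1]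
    have hlam0 : lam = 0 := by
      by_contra hl
      apply hp₁
      refine eval_eq_zero_imp_zero fun z => ?_
      have hf' : Polynomial.derivative (polyLine z (star w) p₁)
          = Polynomial.C lam * polyLine z (star w) p₁ := by
        rw [derivative_polyLine, hq₁p, map_mul]
        congr 1
        simp [polyLine, algebraMap_eq]
      have hdeg : (polyLine z (star w) p₁).natDegree = 0 := by
        by_contra hd
        have hlt := Polynomial.natDegree_derivative_lt hd
        rw [hf', Polynomial.natDegree_C_mul hl] at hlt
        exact lt_irrefl _ hlt
      have hd0 : Polynomial.derivative (polyLine z (star w) p₁) = 0 := by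
        rw [Polynomial.eq_C_of_natDegree_eq_zero hdeg]
        simp
      rw [hd0] at hf'
      have hf0 : polyLine z (star w) p₁ = 0 := by
        rcases mul_eq_zero.mp hf'.symm with h | h
        · exact absurd (Polynomial.C_eq_zero.mp h) hl
        · exact h
      have hev := eval_polyLine z (star w) 0 p₁
      rw [hf0] at hev
      simp only [Polynomial.eval_zero] at hev
      rw [show (fun i => z i + (star w) i * 0) = z from by funext i; simp] at hev
      exact hev.symm
    have hq₁0 : Pd (star w) p₁ = 0 := by rw [hq₁p, hlam0]; simp
    have hq₂0 : Pd (star w) p₂ = 0 := by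
      have h' := hI
      rw [hq₁0, zero_mul, zero_add] at h'
      rcases mul_eq_zero.mp h' with h | h
      · exact absurd h hp₁
      · exact h
    constructor <;> intro z
    · rw [herm_grad, hq₁0]; simp
    · rw [herm_grad, hq₂0]; simp
  have hge : essSpace p₁ ⊔ essSpace p₂ ≤ essSpace (p₁ * p₂) := by
    apply sup_le
    · rw [essSpace, Submodule.span_le]
      rintro _ ⟨z, rfl⟩
      exact mem_of_forall_herm _ _ fun w hw => (key w hw).1 z
    · rw [essSpace, Submodule.span_le]
      rintro _ ⟨z, rfl⟩
      exact mem_of_forall_herm _ _ fun w hw => (key w hw).2 z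
  exact ⟨le_antisymm hle hge, hinf⟩
end

section
/- For N ≥ 3, the set of N linear forms {z₁ − κ_j z₂ : j = 0,…,N−1} with κ_j = exp(iπ(2j+1)/N) cannot be partitioned into two nonempty sets A and B such that every form in A is orthogonal to every form in B, where forms ℓ = z₁ − κ z₂ and ℓ' = z₁ − κ' z₂ are orthogonal iff conj(κ)·κ' = −1. For N = 2 such a partition exists. -/
open MvPolynomial

/-- The j-th root of -1 of order N. -/
noncomputable def kappa (N j : ℕ) : ℂ := Complex.exp (Real.pi * Complex.I * (2 * j + 1) / N)

lemma kappa_inj {N j k : ℕ} (hN : 0 < N) (hj : j < N) (hk : k < N)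
    (h : kappa N j = kappa N k) : j = k := by
  unfold kappa at h
  rw [Complex.exp_eq_exp_iff_exists_int] at h
  obtain ⟨n, hn⟩ := h
  have hNc : (N : ℂ) ≠ 0 := Nat.cast_ne_zero.2 hN.ne'
  have hπ : (Real.pi : ℂ) ≠ 0 := by exact_mod_cast Real.pi_ne_zero
  field_simp at hn
  have hπI : (Real.pi : ℂ) * Complex.I ≠ 0 := mul_ne_zero hπ Complex.I_ne_zero
  have h2 : (2 * (j:ℂ) + 1) = 2 * k + 1 + 2 * n * N := by
    apply mul_left_cancel₀ hπI
    linear_combination ((Real.pi : ℂ) * Complex.I) * hn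
  have h3 : ((j:ℤ) : ℂ) = (((k:ℤ) + n * N : ℤ) : ℂ) := by push_cast; linear_combination h2 / 2
  have h4 : (j:ℤ) = k + n * N := by exact_mod_cast h3
  have hjZ : (j:ℤ) < N := by exact_mod_cast hj
  have hkZ : (k:ℤ) < N := by exact_mod_cast hk
  have hn0 : n = 0 := by nlinarith [Int.natCast_nonneg j, Int.natCast_nonneg k, Int.natCast_pos.2 hN]
  rw [hn0] at h4; simp at h4; exact_mod_cast h4

lemma kappa_ne_zero (N j : ℕ) : kappa N j ≠ 0 := Complex.exp_ne_zero _

/-- For N ≥ 3 the N linear forms z₁ - κ_j z₂ cannot be split into two nonempty mutually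
orthogonal groups (orthogonality: conj(κ)·κ' = -1), while for N = 2 such a split exists. -/
theorem noon_orthogonal_partition :
    (∀ N : ℕ, 3 ≤ N → ¬ ∃ A : Finset (Fin N), A.Nonempty ∧ Aᶜ.Nonempty ∧
      ∀ j ∈ A, ∀ k ∈ Aᶜ, (starRingEnd ℂ) (kappa N (j : ℕ)) * kappa N (k : ℕ) = -1) ∧
    (∃ A : Finset (Fin 2), A.Nonempty ∧ Aᶜ.Nonempty ∧
      ∀ j ∈ A, ∀ k ∈ Aᶜ, (starRingEnd ℂ) (kappa 2 (j : ℕ)) * kappa 2 (k : ℕ) = -1) := by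
  constructor
  · intro N hN
    rintro ⟨A, ⟨j, hj⟩, ⟨k, hk⟩, ho⟩
    have hN0 : 0 < N := by omega
    have hA : ∀ j' ∈ A, j' = j := by
      intro j' hj'
      have h1 := (ho j' hj' k hk).trans (ho j hj k hk).symm
      have h2 : (starRingEnd ℂ) (kappa N j') = (starRingEnd ℂ) (kappa N j) :=
        mul_right_cancel₀ (kappa_ne_zero N k) h1
      have h3 : kappa N (j' : ℕ) = kappa N (j : ℕ) := (starRingEnd ℂ).injective h2
      exact Fin.ext (kappa_inj hN0 j'.isLt j.isLt h3)
    have hB : ∀ k' ∈ Aᶜ, k' = k := by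
      intro k' hk'
      have h1 := (ho j hj k' hk').trans (ho j hj k hk).symm
      have h2 : kappa N (k' : ℕ) = kappa N (k : ℕ) := by
        have hc : (starRingEnd ℂ) (kappa N (j : ℕ)) ≠ 0 := by
          simp [kappa_ne_zero]
        exact mul_left_cancel₀ hc h1
      exact Fin.ext (kappa_inj hN0 k'.isLt k.isLt h2)
    have hsub : (Finset.univ : Finset (Fin N)) ⊆ {j, k} := by
      intro x _
      by_cases hx : x ∈ A
      · simp [hA x hx]
      · simp [hB x (Finset.mem_compl.2 hx)]
    have hcard := Finset.card_le_card hsub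
    have h2 : ({j, k} : Finset (Fin N)).card ≤ 2 :=
      (Finset.card_insert_le _ _).trans (by simp)
    simp [Finset.card_univ] at hcard
    omega
  · refine ⟨{0}, ⟨0, by simp⟩, ⟨1, by decide⟩, ?_⟩
    intro j hj k hk
    fin_cases j <;> fin_cases k <;> first
      | (exfalso; revert hj hk; decide)
      | (show (starRingEnd ℂ) (kappa 2 0) * kappa 2 1 = -1
         unfold kappa
         rw [← Complex.exp_conj, ← Complex.exp_add, ← Complex.exp_pi_mul_I]
         congr 1
         have : (starRingEnd ℂ) ((Real.pi : ℂ)) = Real.pi := Complex.conj_ofReal _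
         simp [map_div₀, map_mul, Complex.conj_I, this, map_ofNat]
         ring)
end
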